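/- The Manin symbols satisfy the relations [P,g] + [P|_{S^{-1}}, gS] = 0, [P,g] = [P|_{J^{-1}}, gJ], and [P,g] + [P|_{(TS)^{-1}}, g(TS)] + [P|_{(TS)^{-2}}, g(TS)²] = 0 in M_k(Γ), for all P ∈ R_{k−2}[X,Y] and g ∈ SL₂(𝒪), where S = (0 −1; 1 0), TS = (1 −1; 1 0), and J = (ε 0; 0 1) with ε the fundamental unit of K. -/

import Mathlib

open scoped MatrixGroups LinearAlgebra.Projectivization Classical
open Matrix MvPolynomial NumberField

set_option maxHeartbeats 1000000
set_option synthInstance.maxHeartbeats 200000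

noncomputable section

namespace Bianchi

/-- `K` is (isomorphic to) the imaginary quadratic field `ℚ(√-d)` for some
`d ∈ {1,2,3,7,11}`, i.e. a Euclidean imaginary quadratic field. -/
def IsEuclideanImagQuad (K : Type) [Field K] [NumberField K] : Prop :=
  ∃ d : ℕ, d ∈ ({1, 2, 3, 7, 11} : Set ℕ) ∧
    ∃ α : K, α ^ 2 = -(d : K) ∧ Algebra.adjoin ℚ {α} = ⊤

variable (K : Type) [Field K] [NumberField K]

/-- 2×2 matrices with entries in `A`. -/
abbrev Mat2 (A : Type*) := Matrix (Fin 2) (Fin 2) A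

/-- The map on matrices induced by the inclusion `𝓞 K → K`. -/
def ιm : Mat2 (𝓞 K) → Mat2 K := fun M => M.map (algebraMap (𝓞 K) K)

/-- The projective line `P¹(K)`, whose points are the cusps. -/
abbrev P1 := ℙ K (Fin 2 → K)

/-- Action of a nonsingular `K`-matrix on `P¹(K)` (acting on column vectors);
junk value (the identity) for singular matrices. -/
def mAct (A : Mat2 K) : P1 K → P1 K :=
  if h : Function.Injective (Matrix.toLin' A) then
    Projectivization.map (Matrix.toLin' A) h else id

/-- The cusp `0 = 0/1 = [0 : 1]`. -/
def c0 : P1 K := Projectivization.mk K ![0, 1]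
  (by intro h; have := congrFun h 1; simp at this)

/-- The cusp `∞ = 1/0 = [1 : 0]`. -/
def cInf : P1 K := Projectivization.mk K ![1, 0]
  (by intro h; have := congrFun h 0; simp at this)

variable (R : Type) [CommRing R] [Algebra (𝓞 K) R] (k : ℕ)

/-- `R_{k-2}[X,Y]`, the space of homogeneous polynomials of degree `k - 2` in two
variables `X, Y` over `R`, presented by the coefficient vectors with respect to the
monomial basis `X^i Y^(k-2-i)`, `0 ≤ i ≤ k-2`. -/
abbrev Poly := Fin (k - 1) → R

/-- The exponent function of the `i`-th basis monomial `X^i Y^(k-2-i)` of `R_{k-2}[X,Y]`. -/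
def expo (i : Fin (k - 1)) : Fin 2 →₀ ℕ :=
  Finsupp.single 0 (i : ℕ) + Finsupp.single 1 (k - 2 - (i : ℕ))

/-- Interpret a coefficient vector as the homogeneous polynomial
`∑ i, P i • X^i Y^(k-2-i)`. -/
def toPoly : Poly R k →ₗ[R] MvPolynomial (Fin 2) R :=
  ∑ i : Fin (k - 1), (monomial (expo k i)).comp (LinearMap.proj i)

/-- Extract the coefficient vector of a homogeneous polynomial of degree `k-2`. -/
def ofPoly : MvPolynomial (Fin 2) R →ₗ[R] Poly R k :=
  LinearMap.pi (fun i => lcoeff R (expo k i))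

/-- The pair of degree-one forms `(dX - bY, -cX + aY)` attached to `g = (a b; c d)`. -/
def substVec (g : Mat2 (𝓞 K)) : Fin 2 → MvPolynomial (Fin 2) R :=
  ![C (algebraMap (𝓞 K) R (g 1 1)) * X 0 - C (algebraMap (𝓞 K) R (g 0 1)) * X 1,
    -(C (algebraMap (𝓞 K) R (g 1 0)) * X 0) + C (algebraMap (𝓞 K) R (g 0 0)) * X 1]

/-- The substitution `P(X,Y) ↦ P(dX - bY, -cX + aY)` for `g = (a b; c d)`. -/
def substMat (g : Mat2 (𝓞 K)) : MvPolynomial (Fin 2) R →ₐ[R] MvPolynomial (Fin 2) R :=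
  aeval (substVec K R g)

/-- The right action `P ↦ P|_g = P(dX - bY, -cX + aY)` of a matrix `g` over `𝓞 K`
on `R_{k-2}[X,Y]` (substitution preserves homogeneity, so this is computed by
passing to polynomials, substituting, and taking coefficients again). -/
def polyAct (g : Mat2 (𝓞 K)) : Poly R k →ₗ[R] Poly R k :=
  (ofPoly R k) ∘ₗ (substMat K R g).toLinearMap ∘ₗ (toPoly R k)

/-- Evaluation `P(x₀, x₁)` of `P ∈ R_{k-2}[X,Y]` at a pair of elements of `R`. -/
def pevalR (P : Poly R k) (x : Fin 2 → R) : R := MvPolynomial.eval x (toPoly R k P)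

end Bianchi
namespace Bianchi

variable (K : Type) [Field K] [NumberField K]
variable (R : Type) [CommRing R] [Algebra (𝓞 K) R] (k : ℕ)
variable (Γ : Subgroup (SL(2, 𝓞 K)))

/-- The relations defining boundary modular symbols: `x|_γ = x` for `γ ∈ Γ`. -/
def bsRel : Submodule R (P1 K →₀ Poly R k) :=
  Submodule.span R {x | ∃ (γ : SL(2, 𝓞 K)) (_ : γ ∈ Γ) (α : P1 K) (P : Poly R k),
    x = Finsupp.single (mAct K (ιm K γ.1) α) (polyAct K R k γ.1 P) - Finsupp.single α P}

/-- The boundary modular symbols `B_k(Γ)` of weight `k` and level `Γ`. -/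
abbrev BS := (P1 K →₀ Poly R k) ⧸ bsRel K R k Γ

/-- The boundary modular symbol `P ⊗ {α}`. -/
def bsym (α : P1 K) (P : Poly R k) : BS K R k Γ :=
  Submodule.Quotient.mk (Finsupp.single α P)

/-- The free module underlying modular symbols. -/
abbrev MSfree := (P1 K × P1 K) →₀ Poly R k

/-- The relations defining modular symbols: `{α,α} = 0`,
`{α,β} + {β,γ} + {γ,α} = 0`, and `x|_γ = x` for `γ ∈ Γ`. -/
def msRel : Submodule R (MSfree K R k) :=
  Submodule.span R
    ({x | ∃ (α : P1 K) (P : Poly R k), x = Finsupp.single (α, α) P} ∪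
     {x | ∃ (α β γ : P1 K) (P : Poly R k),
        x = Finsupp.single (α, β) P + Finsupp.single (β, γ) P + Finsupp.single (γ, α) P} ∪
     {x | ∃ (γ : SL(2, 𝓞 K)) (_ : γ ∈ Γ) (α β : P1 K) (P : Poly R k),
        x = Finsupp.single (mAct K (ιm K γ.1) α, mAct K (ιm K γ.1) β) (polyAct K R k γ.1 P)
          - Finsupp.single (α, β) P})

/-- The modular symbols `M_k(Γ)` of weight `k` and level `Γ`. -/
abbrev MS := MSfree K R k ⧸ msRel K R k Γ

/-- The modular symbol `P ⊗ {α, β}`. -/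
def msym (α β : P1 K) (P : Poly R k) : MS K R k Γ :=
  Submodule.Quotient.mk (Finsupp.single (α, β) P)

/-- The boundary map on the free modules, `P ⊗ {α,β} ↦ P ⊗ {β} - P ⊗ {α}`. -/
def bdFree : MSfree K R k →ₗ[R] (P1 K →₀ Poly R k) :=
  Finsupp.lsum ℕ (fun p : P1 K × P1 K =>
    (Finsupp.lsingle p.2 - Finsupp.lsingle p.1 : Poly R k →ₗ[R] (P1 K →₀ Poly R k)))

lemma bdFree_rel : msRel K R k Γ ≤ (bsRel K R k Γ).comap (bdFree K R k) := by
  rw [msRel, Submodule.span_le]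
  rintro x ((⟨α, P, rfl⟩ | ⟨α, β, γ, P, rfl⟩) | ⟨γ, hγ, α, β, P, rfl⟩) <;>
    simp only [SetLike.mem_coe, Submodule.mem_comap, map_add, map_sub, bdFree,
      Finsupp.lsum_single, LinearMap.sub_apply, Finsupp.lsingle_apply]
  · simpa using (bsRel K R k Γ).zero_mem
  · have h0 : (Finsupp.single β P - Finsupp.single α P)
        + (Finsupp.single γ P - Finsupp.single β P)
        + (Finsupp.single α P - Finsupp.single γ P) = (0 : P1 K →₀ Poly R k) := by abel
    rw [h0]
    exact (bsRel K R k Γ).zero_mem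
  · have h1 : (Finsupp.single (mAct K (ιm K γ.1) β) (polyAct K R k γ.1 P)
        - Finsupp.single β P) ∈ bsRel K R k Γ :=
      Submodule.subset_span ⟨γ, hγ, β, P, rfl⟩
    have h2 : (Finsupp.single (mAct K (ιm K γ.1) α) (polyAct K R k γ.1 P)
        - Finsupp.single α P) ∈ bsRel K R k Γ :=
      Submodule.subset_span ⟨γ, hγ, α, P, rfl⟩
    have h3 := Submodule.sub_mem _ h1 h2
    convert h3 using 1
    abel

/-- The boundary map `∂ : M_k(Γ) → B_k(Γ)`. -/
def bd : MS K R k Γ →ₗ[R] BS K R k Γ :=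
  Submodule.mapQ _ _ (bdFree K R k) (bdFree_rel K R k Γ)

/-- The cuspidal modular symbols `𝒮_k(Γ) = ker ∂`. -/
def Scusp : Submodule R (MS K R k Γ) := LinearMap.ker (bd K R k Γ)

/-- The Manin symbol `[P, g] = P|_g ⊗ {g·0, g·∞}`, for an arbitrary matrix `g` over `𝓞`. -/
def maninSymM (P : Poly R k) (A : Mat2 (𝓞 K)) : MS K R k Γ :=
  msym K R k Γ (mAct K (ιm K A) (c0 K)) (mAct K (ιm K A) (cInf K)) (polyAct K R k A P)

end Bianchi
namespace Bianchi

section ManinRelations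

variable (K : Type) [Field K] [NumberField K]

/-- The matrix `S = (0 -1; 1 0)` of `SL₂(𝓞)`. -/
def Smat : SL(2, 𝓞 K) := ⟨!![0, -1; 1, 0], by norm_num [Matrix.det_fin_two_of]⟩

/-- The matrix `TS = (1 -1; 1 0)` of `SL₂(𝓞)`. -/
def TSmat : SL(2, 𝓞 K) := ⟨!![1, -1; 1, 0], by norm_num [Matrix.det_fin_two_of]⟩

/-- The matrix `J = (ε 0; 0 1)`, `ε` a unit of `𝓞`. -/
def Jmat (e : (𝓞 K)ˣ) : Mat2 (𝓞 K) := !![(e : 𝓞 K), 0; 0, 1]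

end ManinRelations


section AuxLemmas

variable (K : Type) [Field K] [NumberField K]
variable (R : Type) [CommRing R] [Algebra (𝓞 K) R] (k : ℕ)

lemma degree_fin2 (d : Fin 2 →₀ ℕ) : d.degree = d 0 + d 1 := by
  rw [Finsupp.degree_apply, Finset.sum_subset (Finset.subset_univ _)
    (fun i _ hi => Finsupp.notMem_support_iff.1 hi), Fin.sum_univ_two]

lemma expo_apply0 (i : Fin (k - 1)) : expo k i 0 = (i : ℕ) := by
  simp [expo]

lemma expo_apply1 (i : Fin (k - 1)) : expo k i 1 = k - 2 - (i : ℕ) := by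
  simp [expo, Finsupp.single_apply]

lemma expo_degree (hk : 2 ≤ k) (i : Fin (k - 1)) : (expo k i).degree = k - 2 := by
  rw [degree_fin2, expo_apply0, expo_apply1]
  have := i.2
  omega

lemma toPoly_apply (P : Poly R k) :
    toPoly R k P = ∑ i : Fin (k - 1), monomial (expo k i) (P i) := by
  rw [toPoly, LinearMap.sum_apply]
  rfl

lemma toPoly_isHomogeneous (hk : 2 ≤ k) (P : Poly R k) :
    (toPoly R k P).IsHomogeneous (k - 2) := by
  rw [toPoly_apply]
  exact MvPolynomial.IsHomogeneous.sum _ _ _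
    (fun i _ => isHomogeneous_monomial _ (expo_degree k hk i))

lemma toPoly_ofPoly (hk : 2 ≤ k) (Q : MvPolynomial (Fin 2) R)
    (hQ : Q.IsHomogeneous (k - 2)) : toPoly R k (ofPoly R k Q) = Q := by
  ext m
  rw [toPoly_apply, MvPolynomial.coeff_sum]
  simp only [MvPolynomial.coeff_monomial, ofPoly, LinearMap.pi_apply, lcoeff_apply]
  by_cases hc : ∃ i : Fin (k - 1), expo k i = m
  · obtain ⟨i, hi⟩ := hc
    rw [Finset.sum_eq_single i]
    · rw [if_pos hi, hi]
    · intro j _ hj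
      rw [if_neg]
      intro hjm
      apply hj
      have h0 : (j : ℕ) = (i : ℕ) := by
        have := congrArg (fun f => f 0) (hjm.trans hi.symm)
        simpa [expo_apply0] using this
      exact Fin.ext h0
    · intro h; exact absurd (Finset.mem_univ i) h
  · push_neg at hc
    have hz : MvPolynomial.coeff m Q = 0 := by
      by_contra hne
      have hdeg : m.degree = k - 2 := by
        by_contra hd
        exact hne (hQ.coeff_eq_zero hd)
      rw [degree_fin2] at hdeg
      have hm0 : m 0 < k - 1 := by omega
      apply hc ⟨m 0, hm0⟩
      ext j
      fin_cases j <;> simp [expo, Finsupp.single_apply] <;> omega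
    rw [hz]
    apply Finset.sum_eq_zero
    intro i _
    rw [if_neg (hc i)]

lemma substVec_isHomogeneous (A : Mat2 (𝓞 K)) (i : Fin 2) :
    (substVec K R A i).IsHomogeneous 1 := by
  fin_cases i
  · exact MvPolynomial.IsHomogeneous.sub
      (by simpa using ((isHomogeneous_X R (0 : Fin 2)).C_mul _))
      (by simpa using ((isHomogeneous_X R (1 : Fin 2)).C_mul _))
  · exact MvPolynomial.IsHomogeneous.add
      (MvPolynomial.IsHomogeneous.neg (by simpa using ((isHomogeneous_X R (0 : Fin 2)).C_mul _)))
      (by simpa using ((isHomogeneous_X R (1 : Fin 2)).C_mul _))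

lemma substMat_isHomogeneous (A : Mat2 (𝓞 K)) (n : ℕ) (Q : MvPolynomial (Fin 2) R)
    (hQ : Q.IsHomogeneous n) : (substMat K R A Q).IsHomogeneous n := by
  have := hQ.aeval (substVec K R A) (substVec_isHomogeneous K R A)
  simpa [substMat] using this

lemma substMat_comp (A B : Mat2 (𝓞 K)) (Q : MvPolynomial (Fin 2) R) :
    substMat K R B (substMat K R A Q) = substMat K R (B * A) Q := by
  have h : (substMat K R B).comp (substMat K R A) = substMat K R (B * A) := by
    rw [substMat, substMat, substMat, MvPolynomial.comp_aeval]
    congr 1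
    funext i
    fin_cases i <;>
      · simp only [substVec, Fin.zero_eta, Fin.mk_one, Matrix.cons_val_zero, Matrix.cons_val_one,
          Matrix.head_cons, map_sub, map_add, map_neg, _root_.map_mul, aeval_C, aeval_X]
        simp only [Matrix.cons_val_zero, Matrix.cons_val_one, Matrix.head_cons,
          Matrix.mul_apply, Fin.sum_univ_two, map_add, _root_.map_mul, map_sub, map_neg,
          aeval_C, aeval_X, MvPolynomial.algebraMap_eq]
        ring
  rw [← h]; rfl

lemma polyAct_mul (hk : 2 ≤ k) (A B : Mat2 (𝓞 K)) (P : Poly R k) :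
    polyAct K R k B (polyAct K R k A P) = polyAct K R k (B * A) P := by
  simp only [polyAct, LinearMap.comp_apply, AlgHom.toLinearMap_apply]
  rw [toPoly_ofPoly R k hk _
    (substMat_isHomogeneous K R A (k - 2) _ (toPoly_isHomogeneous R k hk P)),
    substMat_comp]

lemma toLin'_injective_of_det {A : Mat2 K} (hA : A.det ≠ 0) :
    Function.Injective (Matrix.toLin' A) := by
  have h : A⁻¹ * A = 1 := Matrix.nonsing_inv_mul A (isUnit_iff_ne_zero.2 hA)
  intro x y hxy
  have h2 := congrArg (Matrix.toLin' A⁻¹) hxy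
  simp only [Matrix.toLin'_apply, Matrix.mulVec_mulVec, h, Matrix.one_mulVec] at h2
  exact h2

lemma mulVec_ne_zero {A : Mat2 K} (hA : A.det ≠ 0) {v : Fin 2 → K} (hv : v ≠ 0) :
    A *ᵥ v ≠ 0 := by
  intro h
  apply hv
  apply toLin'_injective_of_det K hA
  simpa [Matrix.toLin'_apply] using h

lemma mAct_mk (A : Mat2 K) (hA : A.det ≠ 0) (v : Fin 2 → K) (hv : v ≠ 0) :
    mAct K A (Projectivization.mk K v hv) =
      Projectivization.mk K (A *ᵥ v) (mulVec_ne_zero K hA hv) := by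
  rw [mAct, dif_pos (toLin'_injective_of_det K hA)]
  exact Projectivization.map_mk _ _ v hv

lemma mAct_mul (A B : Mat2 K) (hA : A.det ≠ 0) (hB : B.det ≠ 0) (x : P1 K) :
    mAct K (A * B) x = mAct K A (mAct K B x) := by
  induction x using Projectivization.ind with
  | h v hv =>
    have hAB : (A * B).det ≠ 0 := by
      rw [Matrix.det_mul]; exact mul_ne_zero hA hB
    rw [mAct_mk K B hB v hv, mAct_mk K A hA _ _, mAct_mk K (A * B) hAB v hv]
    congr 1
    rw [Matrix.mulVec_mulVec]

lemma mk_congr (v w : Fin 2 → K) (hv : v ≠ 0) (hw : w ≠ 0) (h : v = w) :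
    Projectivization.mk K v hv = Projectivization.mk K w hw := by
  subst h; rfl

lemma det_iota (M : Mat2 (𝓞 K)) : (ιm K M).det = algebraMap (𝓞 K) K M.det :=
  (RingHom.map_det (algebraMap (𝓞 K) K) M).symm

lemma iota_mul (M N : Mat2 (𝓞 K)) : ιm K (M * N) = ιm K M * ιm K N :=
  _root_.Matrix.map_mul

variable (Γ : Subgroup (SL(2, 𝓞 K)))

lemma msym_rel3 (α β γ : P1 K) (P : Poly R k) :
    msym K R k Γ α β P + msym K R k Γ β γ P + msym K R k Γ γ α P = 0 := by
  rw [msym, msym, msym, ← Submodule.Quotient.mk_add, ← Submodule.Quotient.mk_add,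
    Submodule.Quotient.mk_eq_zero]
  exact Submodule.subset_span (Or.inl (Or.inr ⟨α, β, γ, P, rfl⟩))

lemma msym_self (α : P1 K) (P : Poly R k) : msym K R k Γ α α P = 0 := by
  rw [msym, Submodule.Quotient.mk_eq_zero]
  exact Submodule.subset_span (Or.inl (Or.inl ⟨α, P, rfl⟩))

lemma msym_rev (α β : P1 K) (P : Poly R k) :
    msym K R k Γ β α P = - msym K R k Γ α β P := by
  have h := msym_rel3 K R k Γ α β α P
  rw [msym_self] at h
  rw [add_zero] at h
  exact eq_neg_of_add_eq_zero_right h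

end AuxLemmas


section CuspAct

variable (K : Type) [Field K] [NumberField K]

/-- The cusp `1 = [1 : 1]`. -/
def c1 : P1 K := Projectivization.mk K ![1, 1]
  (by intro h; have := congrFun h 0; simp at this)

lemma det_iota_SL (g : SL(2, 𝓞 K)) : (ιm K g.1).det ≠ 0 := by
  rw [det_iota, g.prop, _root_.map_one]
  exact one_ne_zero

lemma mAct_S_c0 : mAct K (ιm K (Smat K).1) (c0 K) = cInf K := by
  rw [c0, mAct_mk K _ (det_iota_SL K (Smat K)), cInf, Projectivization.mk_eq_mk_iff']
  refine ⟨-1, ?_⟩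
  funext j
  fin_cases j <;>
    simp [ιm, Smat, Matrix.mulVec, dotProduct, Fin.sum_univ_two, Matrix.map_apply]

lemma mAct_S_cInf : mAct K (ιm K (Smat K).1) (cInf K) = c0 K := by
  rw [cInf, mAct_mk K _ (det_iota_SL K (Smat K)), c0]
  apply mk_congr
  funext j
  fin_cases j <;>
    simp [ιm, Smat, Matrix.mulVec, dotProduct, Fin.sum_univ_two, Matrix.map_apply]

lemma mAct_TS_c0 : mAct K (ιm K (TSmat K).1) (c0 K) = cInf K := by
  rw [c0, mAct_mk K _ (det_iota_SL K (TSmat K)), cInf, Projectivization.mk_eq_mk_iff']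
  refine ⟨-1, ?_⟩
  funext j
  fin_cases j <;>
    simp [ιm, TSmat, Matrix.mulVec, dotProduct, Fin.sum_univ_two, Matrix.map_apply]

lemma mAct_TS_cInf : mAct K (ιm K (TSmat K).1) (cInf K) = c1 K := by
  rw [cInf, mAct_mk K _ (det_iota_SL K (TSmat K)), c1]
  apply mk_congr
  funext j
  fin_cases j <;>
    simp [ιm, TSmat, Matrix.mulVec, dotProduct, Fin.sum_univ_two, Matrix.map_apply]

lemma mAct_TS_c1 : mAct K (ιm K (TSmat K).1) (c1 K) = c0 K := by
  rw [c1, mAct_mk K _ (det_iota_SL K (TSmat K)), c0]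
  apply mk_congr
  funext j
  fin_cases j <;>
    simp [ιm, TSmat, Matrix.mulVec, dotProduct, Fin.sum_univ_two, Matrix.map_apply]

lemma det_iota_J (e : (𝓞 K)ˣ) : (ιm K (Jmat K e)).det ≠ 0 := by
  rw [det_iota, Jmat, Matrix.det_fin_two_of]
  simp only [mul_one, mul_zero, sub_zero]
  exact (e.isUnit.map (algebraMap (𝓞 K) K)).ne_zero

lemma mAct_J_c0 (e : (𝓞 K)ˣ) : mAct K (ιm K (Jmat K e)) (c0 K) = c0 K := by
  rw [c0, mAct_mk K _ (det_iota_J K e)]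
  apply mk_congr
  funext j
  fin_cases j <;>
    simp [ιm, Jmat, Matrix.mulVec, dotProduct, Fin.sum_univ_two, Matrix.map_apply]

lemma mAct_J_cInf (e : (𝓞 K)ˣ) : mAct K (ιm K (Jmat K e)) (cInf K) = cInf K := by
  rw [cInf, mAct_mk K _ (det_iota_J K e), Projectivization.mk_eq_mk_iff']
  refine ⟨algebraMap (𝓞 K) K e, ?_⟩
  funext j
  fin_cases j <;>
    simp [ιm, Jmat, Matrix.mulVec, dotProduct, Fin.sum_univ_two, Matrix.map_apply]

lemma Jmat_mul_inv (e : (𝓞 K)ˣ) : Jmat K e * Jmat K e⁻¹ = 1 := by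
  rw [Jmat, Jmat, Matrix.mul_fin_two, Matrix.one_fin_two]
  norm_num

end CuspAct

/-- The Manin symbols satisfy the relations
`[P,g] + [P|_{S⁻¹}, gS] = 0`, `[P,g] = [P|_{J⁻¹}, gJ]` and
`[P,g] + [P|_{(TS)⁻¹}, g(TS)] + [P|_{(TS)⁻²}, g(TS)²] = 0` in `M_k(Γ)`, where
`S = (0 -1; 1 0)`, `TS = (1 -1; 1 0)` and `J = (ε 0; 0 1)` with `ε` the fundamental
unit of `K` (a generator of the unit group `𝓞^×`). -/
theorem manin_symbol_relations
    (K : Type) [Field K] [NumberField K] (hK : IsEuclideanImagQuad K)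
    (R : Type) [CommRing R] [Algebra (𝓞 K) R]
    (k : ℕ) (hk : 2 ≤ k)
    (Γ : Subgroup (SL(2, 𝓞 K))) (hΓ : Γ.FiniteIndex)
    (hodd : Odd k → ∀ γ : SL(2, 𝓞 K), γ ∈ Γ → γ.1 ≠ -1)
    (e : (𝓞 K)ˣ) (he : ∀ u : (𝓞 K)ˣ, u ∈ Subgroup.zpowers e)
    (P : Poly R k) (g : SL(2, 𝓞 K)) :
    maninSymM K R k Γ P g.1
        + maninSymM K R k Γ (polyAct K R k ((Smat K)⁻¹).1 P) (g.1 * (Smat K).1) = 0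
    ∧ maninSymM K R k Γ P g.1
        = maninSymM K R k Γ (polyAct K R k (Jmat K e⁻¹) P) (g.1 * Jmat K e)
    ∧ maninSymM K R k Γ P g.1
        + maninSymM K R k Γ (polyAct K R k ((TSmat K)⁻¹).1 P) (g.1 * (TSmat K).1)
        + maninSymM K R k Γ (polyAct K R k (((TSmat K)⁻¹ ^ 2)).1 P) (g.1 * ((TSmat K) ^ 2).1)
        = 0 := by
  have hdg : (ιm K g.1).det ≠ 0 := det_iota_SL K g
  have hdS := det_iota_SL K (Smat K)
  have hdT := det_iota_SL K (TSmat K)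
  have hdJ := det_iota_J K e
  have hPS : polyAct K R k (g.1 * (Smat K).1) (polyAct K R k ((Smat K)⁻¹).1 P)
      = polyAct K R k g.1 P := by
    rw [polyAct_mul K R k hk, mul_assoc, ← Matrix.SpecialLinearGroup.coe_mul,
      mul_inv_cancel, Matrix.SpecialLinearGroup.coe_one, mul_one]
  have hPT : polyAct K R k (g.1 * (TSmat K).1) (polyAct K R k ((TSmat K)⁻¹).1 P)
      = polyAct K R k g.1 P := by
    rw [polyAct_mul K R k hk, mul_assoc, ← Matrix.SpecialLinearGroup.coe_mul,
      mul_inv_cancel, Matrix.SpecialLinearGroup.coe_one, mul_one]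
  have hPT2 : polyAct K R k (g.1 * ((TSmat K) ^ 2).1)
        (polyAct K R k (((TSmat K)⁻¹ ^ 2)).1 P) = polyAct K R k g.1 P := by
    rw [polyAct_mul K R k hk, mul_assoc, ← Matrix.SpecialLinearGroup.coe_mul,
      inv_pow, mul_inv_cancel, Matrix.SpecialLinearGroup.coe_one, mul_one]
  have hPJ : polyAct K R k (g.1 * Jmat K e) (polyAct K R k (Jmat K e⁻¹) P)
      = polyAct K R k g.1 P := by
    rw [polyAct_mul K R k hk, mul_assoc, Jmat_mul_inv, mul_one]
  have hsq : ((TSmat K) ^ 2).1 = (TSmat K).1 * (TSmat K).1 := by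
    rw [pow_two, Matrix.SpecialLinearGroup.coe_mul]
  refine ⟨?_, ?_, ?_⟩
  · simp only [maninSymM]
    rw [hPS, iota_mul]
    rw [mAct_mul K _ _ hdg hdS, mAct_mul K _ _ hdg hdS, mAct_S_c0, mAct_S_cInf,
      msym_rev, neg_add_cancel]
  · simp only [maninSymM]
    rw [hPJ, iota_mul]
    rw [mAct_mul K _ _ hdg hdJ, mAct_mul K _ _ hdg hdJ, mAct_J_c0, mAct_J_cInf]
  · simp only [maninSymM]
    rw [hPT, hPT2, hsq, iota_mul, iota_mul, iota_mul]
    have hdTT : (ιm K (TSmat K).1 * ιm K (TSmat K).1).det ≠ 0 := by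
      rw [Matrix.det_mul]; exact mul_ne_zero hdT hdT
    rw [mAct_mul K _ _ hdg hdT, mAct_mul K _ _ hdg hdT,
      mAct_mul K _ _ hdg hdTT, mAct_mul K _ _ hdg hdTT,
      mAct_mul K _ _ hdT hdT, mAct_mul K _ _ hdT hdT,
      mAct_TS_c0, mAct_TS_cInf, mAct_TS_c1]
    exact msym_rel3 K R k Γ _ _ _ _


end Bianchi
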